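/- There exists a point x in the strictly positive orthant of ℝ² at which the Hessian of the function H(x) = √(x₁+x₂) · (ψ₀(x₁/(x₁+x₂)) + ψ₀(x₂/(x₁+x₂))), where ψ₀(y) = y log y, has a strictly negative eigenvalue; in particular H is not convex on ℝ₊². -/

import Mathlib

open Real Finset

noncomputable abbrev pr (i : Fin 2) : (Fin 2 → ℝ) →L[ℝ] ℝ := ContinuousLinearMap.proj i

noncomputable def Ft : (Fin 2 → ℝ) → ℝ := fun y =>
  (y 0 * Real.log (y 0) + y 1 * Real.log (y 1)
    - (y 0 + y 1) * Real.log (y 0 + y 1)) * (Real.sqrt (y 0 + y 1))⁻¹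

noncomputable def phi : (Fin 2 → ℝ) → ℝ := fun y =>
  (Real.log (y 1) - Real.log (y 0 + y 1)) * (Real.sqrt (y 0 + y 1))⁻¹
    - (y 0 * Real.log (y 0) + y 1 * Real.log (y 1)
        - (y 0 + y 1) * Real.log (y 0 + y 1)) * (2 * (y 0 + y 1) * Real.sqrt (y 0 + y 1))⁻¹

lemma fderiv_Ft (y : Fin 2 → ℝ) (h0 : 0 < y 0) (h1 : 0 < y 1) :
    fderiv ℝ Ft y ![0,1] = phi y := by
  have hs : 0 < y 0 + y 1 := by linarith
  have hsq : 0 < Real.sqrt (y 0 + y 1) := Real.sqrt_pos.2 hs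
  have hp0 : HasFDerivAt (fun y : Fin 2 → ℝ => y 0) (pr 0) y := hasFDerivAt_apply 0 y
  have hp1 : HasFDerivAt (fun y : Fin 2 → ℝ => y 1) (pr 1) y := hasFDerivAt_apply 1 y
  have hps : HasFDerivAt (fun y : Fin 2 → ℝ => y 0 + y 1) (pr 0 + pr 1) y := hp0.add hp1
  have hlog0 := (Real.hasDerivAt_log h0.ne').comp_hasFDerivAt y hp0
  have hlog1 := (Real.hasDerivAt_log h1.ne').comp_hasFDerivAt y hp1
  have hlogs := (Real.hasDerivAt_log hs.ne').comp_hasFDerivAt y hps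
  have hN := ((hp0.mul hlog0).add (hp1.mul hlog1)).sub (hps.mul hlogs)
  have hinv := (((Real.hasDerivAt_sqrt hs.ne').inv hsq.ne').comp_hasFDerivAt y hps)
  have hft := (show HasFDerivAt Ft _ y from hN.mul hinv).fderiv
  rw [hft]
  simp only [ContinuousLinearMap.coe_smul', Pi.smul_apply, ContinuousLinearMap.add_apply,
    ContinuousLinearMap.sub_apply, ContinuousLinearMap.smul_apply,
    ContinuousLinearMap.proj_apply, Matrix.cons_val_zero, Matrix.cons_val_one,
    Matrix.head_cons, smul_eq_mul, Function.comp_apply, Pi.add_apply, Pi.sub_apply, Pi.mul_apply, Pi.inv_apply]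
  have hss : Real.sqrt (y 0 + y 1) * Real.sqrt (y 0 + y 1) = y 0 + y 1 :=
    Real.mul_self_sqrt hs.le
  unfold phi
  field_simp
  ring_nf
  rw [Real.sq_sqrt hs.le]
  ring

lemma sqrt9 : Real.sqrt 9 = 3 := by
  rw [show (9:ℝ) = 3^2 by norm_num, Real.sqrt_sq (by norm_num)]

lemma fderiv_phi : fderiv ℝ phi ![(1:ℝ),8] ![0,1] < 0 := by
  set x : Fin 2 → ℝ := ![(1:ℝ),8] with hx
  have e0 : x 0 = 1 := rfl
  have e1 : x 1 = 8 := rfl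
  have h0 : (0:ℝ) < x 0 := by norm_num [e0]
  have h1 : (0:ℝ) < x 1 := by norm_num [e1]
  have hs : 0 < x 0 + x 1 := by linarith
  have hsq : 0 < Real.sqrt (x 0 + x 1) := Real.sqrt_pos.2 hs
  have hp0 : HasFDerivAt (fun y : Fin 2 → ℝ => y 0) (pr 0) x := hasFDerivAt_apply 0 x
  have hp1 : HasFDerivAt (fun y : Fin 2 → ℝ => y 1) (pr 1) x := hasFDerivAt_apply 1 x
  have hps : HasFDerivAt (fun y : Fin 2 → ℝ => y 0 + y 1) (pr 0 + pr 1) x := hp0.add hp1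
  have hlog0 := (Real.hasDerivAt_log h0.ne').comp_hasFDerivAt x hp0
  have hlog1 := (Real.hasDerivAt_log h1.ne').comp_hasFDerivAt x hp1
  have hlogs := (Real.hasDerivAt_log hs.ne').comp_hasFDerivAt x hps
  have hN := ((hp0.mul hlog0).add (hp1.mul hlog1)).sub (hps.mul hlogs)
  have hsqrt := (Real.hasDerivAt_sqrt hs.ne').comp_hasFDerivAt x hps
  have hinv := ((Real.hasDerivAt_sqrt hs.ne').inv hsq.ne').comp_hasFDerivAt x hps
  have hden := (hps.const_mul (2:ℝ)).mul hsqrt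
  have hdne : (2 * (x 0 + x 1)) * Real.sqrt (x 0 + x 1) ≠ 0 := by positivity
  have hdinv := (hasDerivAt_inv hdne).comp_hasFDerivAt x hden
  have hphi := (show HasFDerivAt phi _ x from
    ((hlog1.sub hlogs).mul hinv).sub (hN.mul hdinv)).fderiv
  rw [hphi]
  simp only [ContinuousLinearMap.coe_smul', Pi.smul_apply, ContinuousLinearMap.add_apply,
    ContinuousLinearMap.sub_apply, ContinuousLinearMap.smul_apply,
    ContinuousLinearMap.proj_apply, Matrix.cons_val_zero, Matrix.cons_val_one,
    Matrix.head_cons, smul_eq_mul, Function.comp_apply, Pi.add_apply, Pi.sub_apply, Pi.mul_apply, Pi.inv_apply, e0, e1]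
  norm_num [sqrt9]
  have hl8 : Real.log 8 = 3 * Real.log 2 := by
    rw [show (8:ℝ) = 2^3 by norm_num, Real.log_pow]; push_cast; ring
  have hl9 : Real.log 9 = 2 * Real.log 3 := by
    rw [show (9:ℝ) = 3^2 by norm_num, Real.log_pow]; push_cast; ring
  have hb : Real.log (9/8 : ℝ) ≤ 9/8 - 1 := Real.log_le_sub_one_of_pos (by norm_num)
  rw [Real.log_div (by norm_num) (by norm_num)] at hb
  have h2 := Real.log_two_gt_d9
  rw [hl8, hl9] at hb ⊢
  nlinarith [hb, h2]

/-- the Tsallis-perspective of the unshifted Shannon entropy term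
`ψ₀(y) = y log y` in dimension 2 has a Hessian with a strictly negative
eigenvalue somewhere on the positive orthant; in particular it is not convex. -/
theorem unshifted_tsallis_shannon_not_convex :
    ∃ x : Fin 2 → ℝ, (∀ i, 0 < x i) ∧
      ∃ v : Fin 2 → ℝ,
        fderiv ℝ (fun y =>
          fderiv ℝ (fun x' : Fin 2 → ℝ =>
            Real.sqrt (∑ i, x' i) *
              ∑ i, (x' i / ∑ j, x' j) * Real.log (x' i / ∑ j, x' j)) y v) x v < 0 := by
  refine ⟨![1,8], ?_, ![0,1], ?_⟩
  · intro i
    fin_cases i <;> norm_num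
  set F : (Fin 2 → ℝ) → ℝ := fun x' =>
    Real.sqrt (∑ i, x' i) * ∑ i, (x' i / ∑ j, x' j) * Real.log (x' i / ∑ j, x' j) with hF
  set U : Set (Fin 2 → ℝ) := {y | 0 < y 0 ∧ 0 < y 1} with hUdef
  have hU : IsOpen U :=
    (isOpen_lt continuous_const (continuous_apply 0)).inter
      (isOpen_lt continuous_const (continuous_apply 1))
  have hFt : ∀ y ∈ U, F y = Ft y := by
    rintro y ⟨h0, h1⟩
    have hs : 0 < y 0 + y 1 := by linarith
    have hsq : 0 < Real.sqrt (y 0 + y 1) := Real.sqrt_pos.2 hs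
    have hss : Real.sqrt (y 0 + y 1) * Real.sqrt (y 0 + y 1) = y 0 + y 1 :=
      Real.mul_self_sqrt hs.le
    simp only [hF, Ft, Fin.sum_univ_two]
    rw [Real.log_div h0.ne' hs.ne', Real.log_div h1.ne' hs.ne']
    field_simp
    ring_nf
    rw [Real.sq_sqrt hs.le]
    ring
  have hinner : ∀ y ∈ U, fderiv ℝ F y ![0,1] = phi y := by
    intro y hy
    obtain ⟨h0, h1⟩ := hy
    have heq : F =ᶠ[nhds y] Ft :=
      Filter.eventuallyEq_of_mem (hU.mem_nhds ⟨h0, h1⟩) fun z hz => hFt z hz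
    rw [heq.fderiv_eq, fderiv_Ft y h0 h1]
  have hxU : (![1,8] : Fin 2 → ℝ) ∈ U := by constructor <;> norm_num
  have houter : (fun y => fderiv ℝ F y ![0,1]) =ᶠ[nhds (![1,8] : Fin 2 → ℝ)] phi :=
    Filter.eventuallyEq_of_mem (hU.mem_nhds hxU) fun z hz => hinner z hz
  rw [houter.fderiv_eq]
  exact fderiv_phi
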